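/- Let f belong to log P, i.e. f is holomorphic on ℍ with 0 ≤ Im f ≤ π, and suppose the non-tangential boundary value f(x+i0) exists for a.e. x ∈ ℝ. Then for every δ ∈ (0,1), ∫_ℝ exp(δ|f(x+i0)|)/(1+x²) dx < ∞ and, for every p > 0, ∫_ℝ |f(x+i0)|^p/(1+x²) dx < ∞. -/

import Mathlib

open Complex MeasureTheory Filter Metric Set

-- Lemma 1: mean value property
lemma meanvalue {G : ℂ → ℂ} {r : ℝ} (h0 : 0 < r) (hr : r < 1)
    (hG : DifferentiableOn ℂ G (ball (0:ℂ) 1)) :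
    ∫ θ in (0:ℝ)..(2*Real.pi), G (circleMap 0 r θ) = 2 * Real.pi * G 0 := by
  have hsub : closedBall (0:ℂ) r ⊆ ball 0 1 := closedBall_subset_ball hr
  have hc : ContinuousOn G (closedBall (0:ℂ) r) := (hG.continuousOn).mono hsub
  have hd : ∀ z ∈ ball (0:ℂ) r \ (∅ : Set ℂ), DifferentiableAt ℂ G z := by
    intro z hz
    exact hG.differentiableAt (isOpen_ball.mem_nhds (ball_subset_ball hr.le hz.1))
  have key := Complex.circleIntegral_sub_center_inv_smul_of_differentiable_on_off_countable
    h0 Set.countable_empty hc hd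
  rw [circleIntegral] at key
  simp only [deriv_circleMap, smul_eq_mul, sub_zero] at key
  have : ∀ θ : ℝ, circleMap 0 r θ * I * ((circleMap 0 r θ)⁻¹ * G (circleMap 0 r θ))
      = I * G (circleMap 0 r θ) := by
    intro θ
    have hne : circleMap 0 r θ ≠ 0 := by
      simpa using circleMap_ne_center (c := (0:ℂ)) h0.ne' (θ := θ)
    field_simp
  simp only [this] at key
  rw [intervalIntegral.integral_const_mul] at key
  have hI : (I : ℂ) ≠ 0 := I_ne_zero
  apply mul_left_cancel₀ hI
  rw [key]; ring


noncomputable def cay (ζ : ℂ) : ℂ := I * (1 + ζ) / (1 - ζ)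

lemma cay_im (ζ : ℂ) : (cay ζ).im = (1 - Complex.normSq ζ) / Complex.normSq (1 - ζ) := by
  unfold cay
  rw [Complex.div_im]
  simp [Complex.normSq_apply]
  ring

lemma cay_zero : cay 0 = I := by simp [cay]

lemma cay_diffAt {ζ : ℂ} (h : ζ ≠ 1) : DifferentiableAt ℂ cay ζ := by
  apply DifferentiableAt.div
  · fun_prop
  · fun_prop
  · simpa [sub_eq_zero] using fun h' => h h'.symm

lemma cay_contAt {ζ : ℂ} (h : ζ ≠ 1) : ContinuousAt cay ζ := (cay_diffAt h).continuousAt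

lemma cay_mem_ball {ζ : ℂ} (h : ζ ∈ ball (0:ℂ) 1) : 0 < (cay ζ).im := by
  rw [cay_im]
  apply div_pos
  · have : ‖ζ‖ < 1 := by simpa using h
    have := Complex.sq_norm ζ
    nlinarith [norm_nonneg ζ]
  · have hne : (1:ℂ) - ζ ≠ 0 := by
      intro h'
      have : ζ = 1 := by linear_combination -h'
      rw [this] at h; simp at h
    simpa [Complex.normSq_pos] using hne

-- boundary value: cay (exp (θ I)) is real, equal to -cot(θ/2)
noncomputable def psi (θ : ℝ) : ℝ := - Real.cos (θ/2) / Real.sin (θ/2)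

lemma half_facts {θ : ℝ} (hθ : θ ∈ Ioo 0 (2*Real.pi)) :
    0 < Real.sin (θ/2) ∧ Real.cos θ = 1 - 2 * Real.sin (θ/2)^2 ∧
    Real.sin θ = 2 * Real.sin (θ/2) * Real.cos (θ/2) := by
  have h2 : 2 * (θ/2) = θ := by ring
  refine ⟨?_, ?_, ?_⟩
  · apply Real.sin_pos_of_pos_of_lt_pi
    · linarith [hθ.1]
    · linarith [hθ.2]
  · rw [← h2, Real.cos_two_mul, Real.sin_sq]; ring
  · have h3 := Real.sin_two_mul (θ/2)
    rw [h2] at h3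
    exact h3

lemma cay_exp {θ : ℝ} (hθ : θ ∈ Ioo 0 (2*Real.pi)) :
    cay (Complex.exp (θ * I)) = (psi θ : ℝ) := by
  obtain ⟨hs, hcos, hsin⟩ := half_facts hθ
  set s := Real.sin (θ/2) with hsdef
  set c := Real.cos (θ/2) with hcdef
  have hsc : s^2 + c^2 = 1 := Real.sin_sq_add_cos_sq (θ/2)
  have hexp : Complex.exp (θ * I) = ((1 - 2*s^2 : ℝ) : ℂ) + ((2*s*c : ℝ) : ℂ) * I := by
    rw [Complex.exp_mul_I, ← Complex.ofReal_cos, ← Complex.ofReal_sin, hcos, hsin]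
  have hden : (1:ℂ) - Complex.exp (θ * I) ≠ 0 := by
    rw [hexp]
    intro h'
    rw [Complex.ext_iff] at h'
    push_cast at h'
    obtain ⟨h1, h2⟩ := h'
    simp [← Complex.ofReal_pow] at h1 h2
    nlinarith [h1, hs]
  unfold cay psi
  rw [div_eq_iff hden, hexp, Complex.ext_iff]
  rw [← hsdef, ← hcdef]
  constructor <;> push_cast <;>
    simp [← Complex.ofReal_pow] <;> field_simp <;> nlinarith [hs, hsc]

lemma psi_hasDeriv {θ : ℝ} (hθ : θ ∈ Ioo 0 (2*Real.pi)) :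
    HasDerivAt psi (1 / (2 * Real.sin (θ/2)^2)) θ := by
  obtain ⟨hs, -, -⟩ := half_facts hθ
  have h1 : HasDerivAt (fun θ : ℝ => θ/2) (1/2) θ := (hasDerivAt_id θ).div_const 2
  have hc : HasDerivAt (fun θ : ℝ => Real.cos (θ/2)) (-Real.sin (θ/2) * (1/2)) θ :=
    (Real.hasDerivAt_cos (θ/2)).comp (h₂ := Real.cos) θ h1
  have hsn : HasDerivAt (fun θ : ℝ => Real.sin (θ/2)) (Real.cos (θ/2) * (1/2)) θ :=
    (Real.hasDerivAt_sin (θ/2)).comp (h₂ := Real.sin) θ h1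
  have : HasDerivAt (fun x => -Real.cos (x/2) / Real.sin (x/2)) ((-(-Real.sin (θ/2) * (1/2)) * Real.sin (θ/2) - -Real.cos (θ/2) * (Real.cos (θ/2) * (1/2))) / Real.sin (θ/2)^2) θ := (hc.neg.div hsn hs.ne')
  convert this using 1
  · rfl
  have hsc := Real.sin_sq_add_cos_sq (θ/2)
  field_simp
  nlinarith [hsc]

lemma psi_strictMono : StrictMonoOn psi (Ioo 0 (2*Real.pi)) := by
  apply strictMonoOn_of_deriv_pos (convex_Ioo _ _)
  · intro θ hθ
    exact (psi_hasDeriv hθ).continuousAt.continuousWithinAt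
  · intro θ hθ
    rw [interior_Ioo] at hθ
    rw [(psi_hasDeriv hθ).deriv]
    obtain ⟨hs, -, -⟩ := half_facts hθ
    positivity

lemma psi_surj : psi '' (Ioo 0 (2*Real.pi)) = univ := by
  apply eq_univ_of_forall
  intro t
  refine ⟨2 * Real.arctan t + Real.pi, ?_, ?_⟩
  · have h1 := Real.arctan_mem_Ioo t
    constructor <;> [nlinarith [h1.1, Real.pi_pos]; nlinarith [h1.2, Real.pi_pos]]
  · unfold psi
    have h2 : (2 * Real.arctan t + Real.pi)/2 = Real.arctan t + Real.pi/2 := by ring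
    rw [h2, Real.cos_add_pi_div_two, Real.sin_add_pi_div_two]
    have hc : Real.cos (Real.arctan t) ≠ 0 := (Real.cos_arctan_pos t).ne'
    rw [neg_neg, div_eq_iff hc]
    have := Real.tan_arctan t
    rw [Real.tan_eq_sin_div_cos, div_eq_iff hc] at this
    exact this

lemma lintegral_image_eq_1d {s : Set ℝ} {f f' : ℝ → ℝ} (hs : MeasurableSet s)
    (hf' : ∀ x ∈ s, HasDerivWithinAt f (f' x) s x) (hf : InjOn f s) (g : ℝ → ENNReal) :
    ∫⁻ x in f '' s, g x = ∫⁻ x in s, ENNReal.ofReal |f' x| * g (f x) := by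
  simpa only [ContinuousLinearMap.det_toSpanSingleton] using
    MeasureTheory.lintegral_image_eq_lintegral_abs_det_fderiv_mul volume hs
      (fun x hx => (hf' x hx).hasFDerivWithinAt) hf g

lemma exp_theta_ne_one {θ : ℝ} (hθ : θ ∈ Ioo 0 (2*Real.pi)) :
    Complex.exp (θ * I) ≠ 1 := by
  obtain ⟨hs, hcos, hsin⟩ := half_facts hθ
  set s := Real.sin (θ/2)
  set c := Real.cos (θ/2)
  have hexp : Complex.exp (θ * I)
      = ((1 - 2*s^2 : ℝ) : ℂ) + ((2*s*c : ℝ) : ℂ) * I := by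
    rw [Complex.exp_mul_I, ← Complex.ofReal_cos, ← Complex.ofReal_sin, hcos, hsin]
  rw [hexp]
  intro h'
  rw [Complex.ext_iff] at h'
  push_cast at h'
  obtain ⟨h1, h2⟩ := h'
  simp [← Complex.ofReal_pow] at h1 h2
  nlinarith [h1, hs]

section
variable {H : ℂ → ℂ} {a : ℝ}

lemma poisson (ha : a < 0)
    (hH : DifferentiableOn ℂ H {z : ℂ | a < z.im})
    (hpos : ∀ z : ℂ, a < z.im → 0 ≤ (H z).re) :
    ∫⁻ t : ℝ, ENNReal.ofReal ((H (t:ℂ)).re / (1 + t^2))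
      ≤ ENNReal.ofReal (Real.pi * (H I).re) := by
  have hdom : IsOpen {z : ℂ | a < z.im} := isOpen_lt continuous_const Complex.continuous_im
  have hmapsb : ∀ ζ : ℂ, ζ ∈ ball (0:ℂ) 1 → cay ζ ∈ {z : ℂ | a < z.im} := fun ζ hζ =>
    lt_trans ha (cay_mem_ball hζ)
  have hone : ∀ ζ : ℂ, ζ ∈ ball (0:ℂ) 1 → ζ ≠ 1 := by
    intro ζ hζ h1
    rw [h1] at hζ
    simp at hζ
  set G : ℂ → ℂ := fun ζ => H (cay ζ) with hGdef
  have hG : DifferentiableOn ℂ G (ball (0:ℂ) 1) := by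
    intro ζ hζ
    exact ((hH.differentiableAt (hdom.mem_nhds (hmapsb ζ hζ))).comp ζ
      (cay_diffAt (hone ζ hζ))).differentiableWithinAt
  have hG0 : G 0 = H I := by rw [hGdef]; simp [cay_zero]
  set r : ℕ → ℝ := fun n => 1 - 1/(n+2) with hrdef
  have hr0 : ∀ n, 0 < r n := by
    intro n
    have : (1:ℝ)/(n+2) ≤ 1/2 := by
      apply div_le_div_of_nonneg_left <;> norm_num
    simp only [hrdef]; linarith
  have hr1 : ∀ n, r n < 1 := by
    intro n
    have : (0:ℝ) < 1/(n+2) := by positivity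
    simp only [hrdef]; linarith
  have hrlim : Tendsto r atTop (nhds 1) := by
    rw [hrdef]
    have hb : Tendsto (fun n : ℕ => ((n:ℝ)+2)) atTop atTop :=
      tendsto_atTop_add_const_right _ 2 tendsto_natCast_atTop_atTop
    have h1 : Tendsto (fun n : ℕ => 1/((n:ℝ)+2)) atTop (nhds 0) := by
      simpa [one_div, Pi.inv_def] using hb.inv_tendsto_atTop
    have := h1.const_sub 1
    simpa using this
  set M := (H I).re with hMdef
  have hM : 0 ≤ M := hpos I (by simp; linarith)
  have twopi_pos := Real.two_pi_pos
  have hcircmem : ∀ n θ, circleMap (0:ℂ) (r n) θ ∈ ball (0:ℂ) 1 := by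
    intro n θ
    have h1 : ‖circleMap 0 (r n) θ‖ = |r n| := norm_circleMap_zero (r n) θ
    simp only [mem_ball, Complex.dist_eq, sub_zero]
    rw [h1, abs_of_pos (hr0 n)]
    exact hr1 n
  have hcont : ∀ n, Continuous (fun θ : ℝ => G (circleMap 0 (r n) θ)) := by
    intro n
    apply hG.continuousOn.comp_continuous (continuous_circleMap 0 (r n))
    exact fun θ => hcircmem n θ
  have hnn : ∀ n θ, 0 ≤ (G (circleMap 0 (r n) θ)).re := fun n θ =>
    hpos _ (hmapsb _ (hcircmem n θ))
  have hintC : ∀ n, IntegrableOn (fun θ => G (circleMap 0 (r n) θ)) (Ioc 0 (2*Real.pi)) :=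
    fun n => (hcont n).integrableOn_Ioc
  have hmean : ∀ n, ∫ θ in Ioo (0:ℝ) (2*Real.pi), (G (circleMap 0 (r n) θ)).re
      = 2*Real.pi*M := by
    intro n
    have h1 := meanvalue (hr0 n) (hr1 n) hG
    rw [intervalIntegral.integral_of_le twopi_pos.le] at h1
    have h2 : ∫ θ in Ioc (0:ℝ) (2*Real.pi), (G (circleMap 0 (r n) θ)).re
        = (∫ θ in Ioc (0:ℝ) (2*Real.pi), G (circleMap 0 (r n) θ)).re := by
      simpa using integral_re (𝕜 := ℂ) (hintC n)
    rw [← MeasureTheory.integral_Ioc_eq_integral_Ioo, h2, h1, hG0]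
    simp
    exact hMdef.symm
  set B : ℕ → ℝ → ENNReal := fun n θ => ENNReal.ofReal ((G (circleMap 0 (r n) θ)).re)
    with hBdef
  have hBle : ∀ n, ∫⁻ θ in Ioo (0:ℝ) (2*Real.pi), B n θ = ENNReal.ofReal (2*Real.pi*M) := by
    intro n
    have hintR : IntegrableOn (fun θ => (G (circleMap 0 (r n) θ)).re) (Ioo 0 (2*Real.pi)) :=
      ((Complex.continuous_re.comp (hcont n)).integrableOn_Ioc).mono_set Ioo_subset_Ioc_self
    rw [hBdef, ← MeasureTheory.ofReal_integral_eq_lintegral_ofReal hintR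
      (ae_of_all _ fun θ => hnn n θ), hmean n]
  -- pointwise limit on Ioo
  have hpsimem : ∀ θ : ℝ, θ ∈ Ioo 0 (2*Real.pi) → ((psi θ : ℝ) : ℂ) ∈ {z : ℂ | a < z.im} := by
    intro θ hθ
    simp only [mem_setOf_eq, Complex.ofReal_im]
    exact ha
  have hlim : ∀ θ ∈ Ioo (0:ℝ) (2*Real.pi),
      Tendsto (fun n => B n θ) atTop (nhds (ENNReal.ofReal ((H ((psi θ : ℝ) : ℂ)).re))) := by
    intro θ hθ
    have t1 : Tendsto (fun n => circleMap 0 (r n) θ) atTop (nhds (Complex.exp (θ * I))) := by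
      have : Tendsto (fun n => ((r n : ℝ) : ℂ)) atTop (nhds (1:ℂ)) := by
        exact_mod_cast (Complex.continuous_ofReal.tendsto 1).comp hrlim
      have h2 := this.mul_const (Complex.exp (θ * I))
      simp only [one_mul] at h2
      convert h2 using 2 with n
      simp [circleMap]
    have hcayc : ContinuousAt cay (Complex.exp (θ * I)) := (cay_diffAt (exp_theta_ne_one hθ)).continuousAt
    have hHc : ContinuousAt H (cay (Complex.exp (θ * I))) := by
      rw [cay_exp hθ]
      exact (hH.differentiableAt (hdom.mem_nhds (hpsimem θ hθ))).continuousAt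
    have t2 : Tendsto (fun n => G (circleMap 0 (r n) θ)) atTop
        (nhds (H (cay (Complex.exp (θ * I))))) := ((hHc.comp hcayc).tendsto).comp t1
    rw [cay_exp hθ] at t2
    exact (ENNReal.continuous_ofReal.tendsto _).comp (Complex.continuous_re.tendsto _ |>.comp t2)
  -- Fatou
  have hFatou : ∫⁻ θ in Ioo (0:ℝ) (2*Real.pi), ENNReal.ofReal ((H ((psi θ : ℝ) : ℂ)).re)
      ≤ ENNReal.ofReal (2*Real.pi*M) := by
    have hmeas : ∀ n, AEMeasurable (B n) (volume.restrict (Ioo (0:ℝ) (2*Real.pi))) := by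
      intro n
      exact (ENNReal.continuous_ofReal.comp (Complex.continuous_re.comp (hcont n))).measurable.aemeasurable
    have key := MeasureTheory.lintegral_liminf_le' (u := atTop) hmeas
    have heq : ∫⁻ θ in Ioo (0:ℝ) (2*Real.pi), ENNReal.ofReal ((H ((psi θ : ℝ) : ℂ)).re)
        = ∫⁻ θ in Ioo (0:ℝ) (2*Real.pi), liminf (fun n => B n θ) atTop := by
      apply setLIntegral_congr_fun measurableSet_Ioo
      intro θ hθ
      exact ((hlim θ hθ).liminf_eq).symm
    rw [heq]
    refine le_trans key ?_
    have : (fun n => ∫⁻ θ in Ioo (0:ℝ) (2*Real.pi), B n θ)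
        = fun _ => ENNReal.ofReal (2*Real.pi*M) := funext hBle
    rw [this, liminf_const]
  -- change of variables
  have hcov := lintegral_image_eq_1d (f := psi) (f' := fun θ => 1 / (2 * Real.sin (θ/2)^2))
    measurableSet_Ioo (fun θ hθ => (psi_hasDeriv hθ).hasDerivWithinAt)
    (psi_strictMono.injOn) (fun t => ENNReal.ofReal ((H (t:ℂ)).re / (1 + t^2)))
  rw [psi_surj] at hcov
  rw [← setLIntegral_univ (fun t : ℝ => ENNReal.ofReal ((H (t:ℂ)).re / (1 + t^2))), hcov]
  -- pointwise identity on Ioo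
  have hpt : ∀ θ ∈ Ioo (0:ℝ) (2*Real.pi),
      ENNReal.ofReal |1 / (2 * Real.sin (θ/2)^2)|
        * ENNReal.ofReal ((H ((psi θ : ℝ) : ℂ)).re / (1 + (psi θ)^2))
      = ENNReal.ofReal ((H ((psi θ : ℝ) : ℂ)).re) * ENNReal.ofReal (1/2) := by
    intro θ hθ
    obtain ⟨hs, -, -⟩ := half_facts hθ
    have hsq : 1 + (psi θ)^2 = 1 / Real.sin (θ/2)^2 := by
      unfold psi
      have hsc := Real.sin_sq_add_cos_sq (θ/2)
      field_simp
      exact hsc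
    have hd : (0:ℝ) ≤ 1 / (2 * Real.sin (θ/2)^2) := by positivity
    rw [_root_.abs_of_nonneg hd, ← ENNReal.ofReal_mul hd, ← ENNReal.ofReal_mul' (by norm_num : (0:ℝ) ≤ 1/2)]
    congr 1
    rw [hsq]
    field_simp
  have heq2 : ∫⁻ θ in Ioo (0:ℝ) (2*Real.pi),
      ENNReal.ofReal |1 / (2 * Real.sin (θ/2)^2)|
        * ENNReal.ofReal ((H ((psi θ : ℝ) : ℂ)).re / (1 + (psi θ)^2))
      = ∫⁻ θ in Ioo (0:ℝ) (2*Real.pi),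
        ENNReal.ofReal ((H ((psi θ : ℝ) : ℂ)).re) * ENNReal.ofReal (1/2) := by
    apply setLIntegral_congr_fun measurableSet_Ioo
    exact hpt
  calc ∫⁻ θ in Ioo (0:ℝ) (2*Real.pi),
        ENNReal.ofReal |1 / (2 * Real.sin (θ/2)^2)|
          * ENNReal.ofReal ((H ((psi θ : ℝ) : ℂ)).re / (1 + (psi θ)^2))
      = ∫⁻ θ in Ioo (0:ℝ) (2*Real.pi),
          ENNReal.ofReal ((H ((psi θ : ℝ) : ℂ)).re) * ENNReal.ofReal (1/2) := heq2
    _ ≤ ENNReal.ofReal (2*Real.pi*M) * ENNReal.ofReal (1/2) := by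
        rw [lintegral_mul_const' _ _ (by simp)]
        exact mul_le_mul_left hFatou _
    _ = ENNReal.ofReal (Real.pi * M) := by
        rw [← ENNReal.ofReal_mul (by positivity)]
        congr 1
        ring
end


noncomputable def Phi (δ : ℝ) (w : ℂ) : ℂ :=
  Complex.exp (δ * (w - (Real.pi/2) * I)) + Complex.exp (-(δ * (w - (Real.pi/2) * I)))

lemma Phi_diff (δ : ℝ) : Differentiable ℂ (Phi δ) := by
  unfold Phi
  fun_prop

lemma Phi_cont (δ : ℝ) : Continuous (Phi δ) := (Phi_diff δ).continuous

lemma cos_half_pos {δ : ℝ} (hδ : δ ∈ Ioo 0 1) : 0 < Real.cos (δ * Real.pi / 2) := by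
  apply Real.cos_pos_of_mem_Ioo
  constructor
  · nlinarith [Real.pi_pos, hδ.1, hδ.2]
  · nlinarith [Real.pi_pos, hδ.1, hδ.2]

lemma Phi_re_lb {δ : ℝ} (hδ : δ ∈ Ioo 0 1) {w : ℂ} (hw : w.im ∈ Icc 0 Real.pi) :
    Real.cos (δ * Real.pi / 2) * Real.exp (δ * |w.re|) ≤ (Phi δ w).re := by
  set ζ : ℂ := (δ:ℂ) * (w - ((Real.pi:ℂ)/2) * I) with hζ
  have hre : ζ.re = δ * w.re := by
    simp [hζ]
  have him' : ζ.im = δ * (w.im - Real.pi/2) := by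
    simp [hζ]
  have h1 : (Phi δ w).re
      = Real.exp (δ*w.re) * Real.cos ζ.im + Real.exp (-(δ*w.re)) * Real.cos ζ.im := by
    unfold Phi
    rw [Complex.add_re, Complex.exp_re, Complex.exp_re, ← hζ]
    simp [hre, Real.cos_neg]
  have hcos : Real.cos (δ * Real.pi / 2) ≤ Real.cos ζ.im := by
    rw [← Real.cos_abs ζ.im]
    apply Real.cos_le_cos_of_nonneg_of_le_pi (abs_nonneg _)
    · nlinarith [Real.pi_pos, hδ.2.le, hδ.1.le]
    · rw [him', abs_mul, abs_of_pos hδ.1]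
      have h2 : |w.im - Real.pi/2| ≤ Real.pi/2 :=
        abs_le.2 ⟨by linarith [hw.1], by linarith [hw.2]⟩
      nlinarith [hδ.1]
  have hsum : Real.exp (δ*|w.re|) ≤ Real.exp (δ*w.re) + Real.exp (-(δ*w.re)) := by
    rcases abs_cases w.re with ⟨h, -⟩ | ⟨h, -⟩ <;> rw [h]
    · linarith [Real.exp_pos (-(δ*w.re))]
    · rw [show δ * -w.re = -(δ*w.re) by ring]
      linarith [Real.exp_pos (δ*w.re)]
  calc Real.cos (δ * Real.pi / 2) * Real.exp (δ * |w.re|)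
      ≤ Real.cos ζ.im * (Real.exp (δ*w.re) + Real.exp (-(δ*w.re))) := by
        apply mul_le_mul hcos hsum (Real.exp_pos _).le
        exact le_trans (cos_half_pos hδ).le hcos
    _ = (Phi δ w).re := by rw [h1]; ring

lemma Phi_re_nonneg {δ : ℝ} (hδ : δ ∈ Ioo 0 1) {w : ℂ} (hw : w.im ∈ Icc 0 Real.pi) :
    0 ≤ (Phi δ w).re :=
  le_trans (mul_nonneg (cos_half_pos hδ).le (Real.exp_pos _).le) (Phi_re_lb hδ hw)

lemma rpow_le_const_mul_exp {δ p : ℝ} (hδ : 0 < δ) (hp : 0 < p) :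
    ∃ C : ℝ, 0 ≤ C ∧ ∀ t : ℝ, 0 ≤ t → t ^ p ≤ C * Real.exp (δ * t) := by
  set k := ⌈p⌉₊ with hk
  refine ⟨max 1 (k.factorial / δ^k), le_trans zero_le_one (le_max_left _ _), ?_⟩
  intro t ht
  have hexp1 : (1:ℝ) ≤ Real.exp (δ*t) := by
    have := Real.exp_le_exp.mpr (show (0:ℝ) ≤ δ*t by positivity)
    rwa [Real.exp_zero] at this
  rcases le_or_gt t 1 with h1 | h1
  · have h2 : t ^ p ≤ 1 := Real.rpow_le_one ht h1 hp.le
    calc t^p ≤ 1 := h2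
      _ = 1 * 1 := by ring
      _ ≤ max 1 (k.factorial / δ^k) * Real.exp (δ*t) :=
          mul_le_mul (le_max_left _ _) hexp1 zero_le_one
            (le_trans zero_le_one (le_max_left _ _))
  · have h2 : t ^ p ≤ t ^ (k:ℝ) := Real.rpow_le_rpow_of_exponent_le h1.le (Nat.le_ceil p)
    rw [Real.rpow_natCast] at h2
    have h3 : (δ*t)^k / k.factorial ≤ Real.exp (δ*t) :=
      Real.pow_div_factorial_le_exp (x := δ*t) (by positivity) k
    have hfac : (0:ℝ) < k.factorial := by positivity
    have h4 : t^k = (δ*t)^k / δ^k := by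
      rw [mul_pow]
      field_simp
    calc t^p ≤ t^k := h2
      _ = (δ*t)^k/δ^k := h4
      _ ≤ (k.factorial * Real.exp (δ*t))/δ^k := by
          apply (div_le_div_iff_of_pos_right (show (0:ℝ) < δ^k by positivity)).mpr
          have h5 := (div_le_iff₀ hfac).mp h3
          nlinarith [h5]
      _ = (k.factorial/δ^k) * Real.exp (δ*t) := by ring
      _ ≤ max 1 (k.factorial / δ^k) * Real.exp (δ*t) :=
          mul_le_mul_of_nonneg_right (le_max_right _ _) (Real.exp_pos _).le


theorem stmt_16 (f : ℂ → ℂ)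
    (hdiff : DifferentiableOn ℂ f {z : ℂ | 0 < z.im})
    (him : ∀ z : ℂ, 0 < z.im → (f z).im ∈ Set.Icc (0 : ℝ) Real.pi)
    (g : ℝ → ℂ)
    (hbdry : ∀ᵐ x : ℝ, Tendsto (fun y : ℝ => f ((x : ℂ) + (y : ℂ) * Complex.I))
      (nhdsWithin 0 (Set.Ioi 0)) (nhds (g x))) :
    ∀ δ ∈ Set.Ioo (0 : ℝ) 1,
      Integrable (fun x : ℝ => Real.exp (δ * ‖g x‖) / (1 + x ^ 2)) ∧
      ∀ p : ℝ, 0 < p → Integrable (fun x : ℝ => ‖g x‖ ^ p / (1 + x ^ 2)) := by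
  intro δ hδ
  set c := Real.cos (δ * Real.pi / 2) with hcdef
  have hc : 0 < c := cos_half_pos hδ
  set y : ℕ → ℝ := fun n => 1/(n+1) with hydef
  have hy0 : ∀ n, 0 < y n := fun n => by positivity
  have hylim : Tendsto y atTop (nhds 0) := tendsto_one_div_add_atTop_nhds_zero_nat
  have hyseq : Tendsto y atTop (nhdsWithin 0 (Ioi 0)) :=
    tendsto_nhdsWithin_iff.mpr ⟨hylim, Eventually.of_forall (fun n => hy0 n)⟩
  have hopen : IsOpen {z : ℂ | 0 < z.im} := isOpen_lt continuous_const Complex.continuous_im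
  have hfc : ∀ z ∈ {z : ℂ | 0 < z.im}, ContinuousAt f z := fun z hz =>
    (hdiff.differentiableAt (hopen.mem_nhds hz)).continuousAt
  have haeseq : ∀ᵐ x : ℝ, Tendsto (fun n => f ((x:ℂ) + (y n : ℂ) * I)) atTop (nhds (g x)) := by
    filter_upwards [hbdry] with x hx
    exact hx.comp hyseq
  have hmemn : ∀ (n : ℕ) (x : ℝ), ((x:ℂ) + (y n : ℂ) * I) ∈ {z : ℂ | 0 < z.im} := by
    intro n x
    simp only [mem_setOf_eq, Complex.add_im, Complex.ofReal_im, Complex.mul_im,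
      Complex.ofReal_re, Complex.I_im, Complex.I_re, Complex.ofReal_im]
    simpa using hy0 n
  have hcontn : ∀ n : ℕ, Continuous (fun x : ℝ => f ((x:ℂ) + (y n : ℂ) * I)) := by
    intro n
    apply hdiff.continuousOn.comp_continuous
    · continuity
    · exact hmemn n
  have hgmeas : AEMeasurable g :=
    aemeasurable_of_tendsto_metrizable_ae atTop
      (fun n => (hcontn n).measurable.aemeasurable) haeseq
  have haeIm : ∀ᵐ x : ℝ, (g x).im ∈ Icc 0 Real.pi := by
    filter_upwards [haeseq] with x hx
    have h1 : Tendsto (fun n => (f ((x:ℂ) + (y n : ℂ) * I)).im) atTop (nhds (g x).im) :=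
      (Complex.continuous_im.tendsto _).comp hx
    exact isClosed_Icc.mem_of_tendsto h1
      (Eventually.of_forall (fun n => him _ (hmemn n x)))
  -- Poisson bound for each n
  have hP : ∀ n : ℕ, ∫⁻ t : ℝ, ENNReal.ofReal
        ((Phi δ (f ((t:ℂ) + (y n : ℂ) * I))).re / (1 + t^2))
      ≤ ENNReal.ofReal (Real.pi * (Phi δ (f (I + (y n : ℂ) * I))).re) := by
    intro n
    have hdiffn : DifferentiableOn ℂ (fun z : ℂ => Phi δ (f (z + (y n : ℂ) * I)))
        {z : ℂ | -(y n) < z.im} := by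
      have h1 : DifferentiableOn ℂ (fun z : ℂ => f (z + (y n : ℂ) * I))
          {z : ℂ | -(y n) < z.im} := by
        intro z hz
        have hzu : (z + (y n : ℂ) * I) ∈ {z : ℂ | 0 < z.im} := by
          simp only [mem_setOf_eq, Complex.add_im, Complex.mul_im, Complex.ofReal_re,
            Complex.I_im, Complex.I_re, Complex.ofReal_im]
          simp only [mem_setOf_eq] at hz
          simpa using by linarith [hz]
        exact ((hdiff.differentiableAt (hopen.mem_nhds hzu)).comp z
          ((differentiableAt_id.add_const _))).differentiableWithinAt
      exact (Phi_diff δ).comp_differentiableOn h1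
    have hposn : ∀ z : ℂ, -(y n) < z.im → 0 ≤ ((fun z : ℂ => Phi δ (f (z + (y n : ℂ) * I))) z).re := by
      intro z hz
      have hzu : (z + (y n : ℂ) * I) ∈ {z : ℂ | 0 < z.im} := by
        simp only [mem_setOf_eq, Complex.add_im, Complex.mul_im, Complex.ofReal_re,
          Complex.I_im, Complex.I_re, Complex.ofReal_im]
        simpa using by linarith [hz]
      exact Phi_re_nonneg hδ (him _ hzu)
    exact poisson (neg_lt_zero.mpr (hy0 n)) hdiffn hposn
  -- limit of RHS
  have hIlim : Tendsto (fun n => Real.pi * (Phi δ (f (I + (y n : ℂ) * I))).re) atTop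
      (nhds (Real.pi * (Phi δ (f I)).re)) := by
    have h1 : Tendsto (fun n => (I + (y n : ℂ) * I)) atTop (nhds I) := by
      have h2 := ((Complex.continuous_ofReal.tendsto 0).comp hylim).mul_const I
      have h3 := (tendsto_const_nhds (α := ℕ) (f := atTop) (x := I)).add h2
      simpa using h3
    have h2 : ContinuousAt f I := hfc I (by simp)
    have h4 : Tendsto (fun n => Phi δ (f (I + (y n : ℂ) * I))) atTop (nhds (Phi δ (f I))) :=
      (((Phi_cont δ).tendsto _).comp (h2.tendsto.comp h1))
    exact ((Complex.continuous_re.tendsto _).comp h4).const_mul Real.pi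
  set T := ENNReal.ofReal (Real.pi * (Phi δ (f I)).re) with hTdef
  have hmeasA : ∀ n : ℕ, AEMeasurable (fun x : ℝ =>
      ENNReal.ofReal ((Phi δ (f ((x:ℂ) + (y n : ℂ) * I))).re / (1 + x^2))) volume := by
    intro n
    have h1 : Continuous fun x : ℝ => (Phi δ (f ((x:ℂ) + (y n : ℂ) * I))).re / (1 + x^2) := by
      apply Continuous.div
      · exact Complex.continuous_re.comp ((Phi_cont δ).comp (hcontn n))
      · continuity
      · intro x; positivity
    exact (ENNReal.continuous_ofReal.comp h1).measurable.aemeasurable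
  have hFatou := lintegral_liminf_le' (u := atTop) hmeasA
  have hliminfle : liminf (fun n => ∫⁻ x : ℝ,
      ENNReal.ofReal ((Phi δ (f ((x:ℂ) + (y n : ℂ) * I))).re / (1 + x^2))) atTop ≤ T := by
    refine le_trans (liminf_le_liminf (Eventually.of_forall hP)) ?_
    rw [(ENNReal.tendsto_ofReal hIlim).liminf_eq]
  have haeEq : ∀ᵐ x : ℝ, liminf (fun n =>
      ENNReal.ofReal ((Phi δ (f ((x:ℂ) + (y n : ℂ) * I))).re / (1 + x^2))) atTop
      = ENNReal.ofReal ((Phi δ (g x)).re / (1 + x^2)) := by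
    filter_upwards [haeseq] with x hx
    have hcw : Continuous fun w : ℂ => ENNReal.ofReal ((Phi δ w).re / (1 + x^2)) := by
      apply ENNReal.continuous_ofReal.comp
      exact (Complex.continuous_re.comp (Phi_cont δ)).div_const _
    exact ((hcw.tendsto _).comp hx).liminf_eq
  have hmain : ∫⁻ x : ℝ, ENNReal.ofReal ((Phi δ (g x)).re / (1 + x^2)) ≤ T := by
    calc ∫⁻ x : ℝ, ENNReal.ofReal ((Phi δ (g x)).re / (1 + x^2))
        = ∫⁻ x : ℝ, liminf (fun n =>
            ENNReal.ofReal ((Phi δ (f ((x:ℂ) + (y n : ℂ) * I))).re / (1 + x^2))) atTop :=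
          lintegral_congr_ae (haeEq.mono fun x h => h.symm)
      _ ≤ liminf (fun n => ∫⁻ x : ℝ,
            ENNReal.ofReal ((Phi δ (f ((x:ℂ) + (y n : ℂ) * I))).re / (1 + x^2))) atTop := hFatou
      _ ≤ T := hliminfle
  -- pointwise exp bound
  set K := Real.exp (δ * Real.pi) / c with hKdef
  have hK : 0 ≤ K := by positivity
  have haeB : ∀ᵐ x : ℝ, Real.exp (δ * ‖g x‖) ≤ K * (Phi δ (g x)).re := by
    filter_upwards [haeIm] with x hx
    have h1 : ‖g x‖ ≤ |(g x).re| + Real.pi := by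
      have h2 := Complex.norm_le_abs_re_add_abs_im (g x)
      have him2 : |(g x).im| ≤ Real.pi := abs_le.2 ⟨by linarith [hx.1, Real.pi_pos], hx.2⟩
      calc ‖g x‖ = ‖g x‖ := rfl
        _ ≤ |(g x).re| + |(g x).im| := h2
        _ ≤ _ := by linarith
    have h2 : Real.exp (δ * ‖g x‖) ≤ Real.exp (δ * |(g x).re|) * Real.exp (δ * Real.pi) := by
      rw [← Real.exp_add]
      apply Real.exp_le_exp.mpr
      nlinarith [hδ.1]
    have h3 := Phi_re_lb hδ hx
    calc Real.exp (δ * ‖g x‖) ≤ Real.exp (δ * |(g x).re|) * Real.exp (δ * Real.pi) := h2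
      _ ≤ ((Phi δ (g x)).re / c) * Real.exp (δ * Real.pi) := by
          apply mul_le_mul_of_nonneg_right _ (Real.exp_pos _).le
          rw [le_div_iff₀ hc]
          linarith [h3]
      _ = K * (Phi δ (g x)).re := by rw [hKdef]; ring
  -- measurability
  have hnormmeas : AEMeasurable (fun x : ℝ => ‖g x‖) := hgmeas.norm
  have hmeas1 : AEStronglyMeasurable (fun x : ℝ => Real.exp (δ * ‖g x‖) / (1 + x^2)) volume := by
    have h1 : AEMeasurable (fun x : ℝ => Real.exp (δ * ‖g x‖)) :=
      Real.continuous_exp.measurable.comp_aemeasurable (hnormmeas.const_mul δ)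
    exact (h1.div ((measurable_const.add (measurable_id.pow_const 2)).aemeasurable
      (μ := volume))).aestronglyMeasurable
  have hint1 : Integrable (fun x : ℝ => Real.exp (δ * ‖g x‖) / (1 + x ^ 2)) := by
    refine ⟨hmeas1, ?_⟩
    rw [hasFiniteIntegral_iff_ofReal (ae_of_all _ (fun x => by positivity))]
    calc ∫⁻ x : ℝ, ENNReal.ofReal (Real.exp (δ * ‖g x‖) / (1 + x^2))
        ≤ ∫⁻ x : ℝ, ENNReal.ofReal K * ENNReal.ofReal ((Phi δ (g x)).re / (1 + x^2)) := by
          apply lintegral_mono_ae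
          filter_upwards [haeB] with x hB
          rw [← ENNReal.ofReal_mul hK]
          apply ENNReal.ofReal_le_ofReal
          rw [← mul_div_assoc]
          gcongr
      _ = ENNReal.ofReal K * ∫⁻ x : ℝ, ENNReal.ofReal ((Phi δ (g x)).re / (1 + x^2)) :=
          lintegral_const_mul' _ _ (by simp)
      _ ≤ ENNReal.ofReal K * T := mul_le_mul_right hmain _
      _ < ⊤ := by
          rw [hTdef]
          exact ENNReal.mul_lt_top ENNReal.ofReal_lt_top ENNReal.ofReal_lt_top
  refine ⟨hint1, ?_⟩
  intro p hp
  obtain ⟨C, hC0, hCb⟩ := rpow_le_const_mul_exp hδ.1 hp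
  have hmeas2 : AEStronglyMeasurable (fun x : ℝ => ‖g x‖ ^ p / (1 + x^2)) volume := by
    have h1 : AEMeasurable (fun x : ℝ => ‖g x‖ ^ p) := hnormmeas.pow_const p
    exact (h1.div ((measurable_const.add (measurable_id.pow_const 2)).aemeasurable
      (μ := volume))).aestronglyMeasurable
  apply Integrable.mono (hint1.const_mul C) hmeas2
  apply ae_of_all
  intro x
  have hb := hCb ‖g x‖ (norm_nonneg _)
  have hden : (0:ℝ) < 1 + x^2 := by positivity
  rw [Real.norm_eq_abs, Real.norm_eq_abs, _root_.abs_of_nonneg (by positivity),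
    _root_.abs_of_nonneg (by positivity)]
  rw [← mul_div_assoc]
  gcongr
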